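/- For every natural number n, the group given by the balanced presentation ⟨a, b ∣ a·b·a = b·a·b, aⁿ = bⁿ⁺¹⟩ is the trivial group; that is, every element of the presented group with generators a, b and relators a·b·a·(b·a·b)⁻¹ and aⁿ·(bⁿ⁺¹)⁻¹ equals the identity. -/
import Mathlib


private lemma mk_rel_eq_one {α : Type*} {rels : Set (FreeGroup α)} {r : FreeGroup α}
    (hr : r ∈ rels) : PresentedGroup.mk rels r = 1 := by
  have : r ∈ Subgroup.normalClosure rels := Subgroup.subset_normalClosure hr
  exact (QuotientGroup.eq_one_iff r).mpr this

/-- The Andrews–Curtis type presentation ⟨a, b ∣ a·b·a = b·a·b, aⁿ = bⁿ⁺¹⟩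
(relators a·b·a·(b·a·b)⁻¹ and aⁿ·(bⁿ⁺¹)⁻¹, with generators a = of true,
b = of false) presents the trivial group, for every natural number n. -/
theorem presentedGroup_braid_pow_trivial (n : ℕ)
    (x : PresentedGroup
      ({FreeGroup.of true * FreeGroup.of false * FreeGroup.of true *
          (FreeGroup.of false * FreeGroup.of true * FreeGroup.of false)⁻¹,
        FreeGroup.of true ^ n * (FreeGroup.of false ^ (n + 1))⁻¹} :
        Set (FreeGroup Bool))) :
    x = 1 := by
  revert x
  set rels : Set (FreeGroup Bool) :=
    {FreeGroup.of true * FreeGroup.of false * FreeGroup.of true *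
        (FreeGroup.of false * FreeGroup.of true * FreeGroup.of false)⁻¹,
      FreeGroup.of true ^ n * (FreeGroup.of false ^ (n + 1))⁻¹} with hrels
  set a : PresentedGroup rels := PresentedGroup.of true with ha
  set b : PresentedGroup rels := PresentedGroup.of false with hb
  -- the two relations
  have h1 : a * b * a = b * a * b := by
    have := mk_rel_eq_one (rels := rels)
      (r := FreeGroup.of true * FreeGroup.of false * FreeGroup.of true *
        (FreeGroup.of false * FreeGroup.of true * FreeGroup.of false)⁻¹)
      (by rw [hrels]; left; rfl)
    simp only [map_mul, map_inv] at this
    have h := mul_eq_one_iff_eq_inv.mp this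
    rw [inv_inv] at h
    exact h
  have h2 : a ^ n = b ^ (n + 1) := by
    have := mk_rel_eq_one (rels := rels)
      (r := FreeGroup.of true ^ n * (FreeGroup.of false ^ (n + 1))⁻¹)
      (by rw [hrels]; right; rfl)
    simp only [map_mul, map_inv, map_pow] at this
    have h := mul_eq_one_iff_eq_inv.mp this
    rw [inv_inv] at h
    exact h
  -- conjugation by t = a*b sends a ↦ b and b ↦ a*b*a⁻¹
  have hc1 : (a * b) * a * (a * b)⁻¹ = b := by
    have : (a * b) * a * (a * b)⁻¹ = (a * b * a) * (b⁻¹ * a⁻¹) := by group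
    rw [this, h1]; group
  have hc2 : (a * b) * b * (a * b)⁻¹ = a * b * a⁻¹ := by group
  -- derive b = 1
  have key : b ^ n = a ^ n := by
    calc b ^ n = ((a * b) * a * (a * b)⁻¹) ^ n := by rw [hc1]
      _ = (a * b) * a ^ n * (a * b)⁻¹ := conj_pow
      _ = (a * b) * b ^ (n + 1) * (a * b)⁻¹ := by rw [h2]
      _ = ((a * b) * b * (a * b)⁻¹) ^ (n + 1) := by rw [conj_pow]
      _ = (a * b * a⁻¹) ^ (n + 1) := by rw [hc2]
      _ = a * b ^ (n + 1) * a⁻¹ := conj_pow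
      _ = a * a ^ n * a⁻¹ := by rw [h2]
      _ = a ^ n := by group
  have hb1 : b = 1 := by
    have : b ^ n * b = b ^ n * 1 := by
      rw [mul_one, ← pow_succ, ← h2, ← key]
    exact mul_left_cancel this
  have ha1 : a = 1 := by
    have := h1
    rw [hb1, mul_one, one_mul, mul_one] at this
    -- this : a * a = a
    have h' : a * a = a * 1 := by rw [mul_one]; exact this
    exact mul_left_cancel h'
  -- every element is 1
  have hall : ∀ z : FreeGroup Bool, (PresentedGroup.mk rels z : PresentedGroup rels) = 1 := by
    intro z
    refine FreeGroup.induction_on z (map_one _) ?_ ?_ ?_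
    · intro x
      cases x
      · exact hb1
      · exact ha1
    · intro x hx
      rw [map_inv, hx, inv_one]
    · intro x y hx hy
      rw [map_mul, hx, hy, one_mul]
  intro x
  exact PresentedGroup.induction_on (C := fun y => y = 1) x hall
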